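/- The 3-dimensional hypercube graph Q_3 admits a star edge-coloring with 4 colors; hence χ'_s(Q_3) = 4. -/

import Mathlib

open SimpleGraph

/-- A star edge-coloring: proper (adjacent distinct edges get different colors),
and no path with 4 edges nor 4-cycle uses at most two colors. -/
def IsStarEdgeColoring {V α : Type*} (G : SimpleGraph V) (c : Sym2 V → α) : Prop :=
  (∀ e₁ ∈ G.edgeSet, ∀ e₂ ∈ G.edgeSet, e₁ ≠ e₂ → (∃ v, v ∈ e₁ ∧ v ∈ e₂) → c e₁ ≠ c e₂) ∧
  (∀ (u v : V) (p : G.Walk u v), p.IsPath → p.length = 4 →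
      ¬ ∃ a b : α, ∀ e ∈ p.edges, c e = a ∨ c e = b) ∧
  (∀ (u : V) (p : G.Walk u u), p.IsCycle → p.length = 4 →
      ¬ ∃ a b : α, ∀ e ∈ p.edges, c e = a ∨ c e = b)

/-- The star chromatic index. -/
noncomputable def starChromaticIndex {V : Type*} (G : SimpleGraph V) : ℕ :=
  sInf {k | ∃ c : Sym2 V → Fin k, IsStarEdgeColoring G c}

/-- The 3-dimensional hypercube graph: vertices are {0,1}³, adjacency is
differing in exactly one coordinate. -/
def cubeQ3 : SimpleGraph (Fin 3 → Bool) where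
  Adj x y := ∃! i, x i ≠ y i
  symm := by
    constructor
    rintro x y ⟨i, hi, hu⟩
    exact ⟨i, hi.symm, fun j hj => hu j hj.symm⟩
  loopless := by
    constructor
    rintro x ⟨i, hi, -⟩
    exact hi rfl

/-! ### Auxiliary setup -/

abbrev Vc := Fin 3 → Bool

instance : DecidableRel cubeQ3.Adj :=
  fun x y => decidable_of_iff (∃ i, (x i ≠ y i) ∧ ∀ j, (x j ≠ y j) → j = i) Iff.rfl

def en (x : Vc) : ℕ := (if x 0 then 1 else 0) + (if x 1 then 2 else 0) + (if x 2 then 4 else 0)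

def tb : ℕ → ℕ → Fin 4
  | 0, 1 => 0 | 0, 2 => 1 | 0, 4 => 2 | 1, 3 => 2 | 1, 5 => 3 | 2, 3 => 3
  | 2, 6 => 0 | 3, 7 => 1 | 4, 5 => 1 | 4, 6 => 3 | 5, 7 => 0 | 6, 7 => 2
  | _, _ => 0

def cQ : Sym2 Vc → Fin 4 :=
  Sym2.lift ⟨fun x y => tb (min (en x) (en y)) (max (en x) (en y)),
    fun x y => by simp [min_comm, max_comm]⟩

/-- Destructure a walk of length 4. -/
lemma walk_len4 {V : Type*} {G : SimpleGraph V} {u v : V} (p : G.Walk u v)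
    (hp : p.length = 4) :
    ∃ (a b c : V) (h1 : G.Adj u a) (h2 : G.Adj a b) (h3 : G.Adj b c) (h4 : G.Adj c v),
      p = Walk.cons h1 (Walk.cons h2 (Walk.cons h3 (Walk.cons h4 Walk.nil))) := by
  cases p with
  | nil => simp at hp
  | cons h1 q =>
  cases q with
  | nil => simp at hp
  | cons h2 r =>
  cases r with
  | nil => simp at hp
  | cons h3 s =>
  cases s with
  | nil => simp at hp
  | cons h4 t =>
  cases t with
  | nil => exact ⟨_, _, _, h1, h2, h3, h4, rfl⟩
  | cons h5 w => simp [Nat.succ_eq_add_one] at hp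

set_option maxHeartbeats 1000000 in
set_option maxRecDepth 10000 in
lemma properLem : ∀ x y z w : Vc, (cubeQ3.Adj x y ∧ cubeQ3.Adj z w ∧
    ¬((x = z ∧ y = w) ∨ (x = w ∧ y = z)) ∧
    (∃ v, (v = x ∨ v = y) ∧ (v = z ∨ v = w))) → cQ s(x,y) ≠ cQ s(z,w) := by
  decide

set_option maxHeartbeats 2000000 in
set_option maxRecDepth 10000 in
lemma pathLem : ∀ x0 x1 x2 x3 x4 : Vc, cubeQ3.Adj x0 x1 → cubeQ3.Adj x1 x2 →
    cubeQ3.Adj x2 x3 → cubeQ3.Adj x3 x4 → ([x0,x1,x2,x3,x4] : List Vc).Nodup →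
    ¬∃ a b : Fin 4, ∀ e ∈ [s(x0,x1),s(x1,x2),s(x2,x3),s(x3,x4)], cQ e = a ∨ cQ e = b := by
  decide

set_option maxHeartbeats 1000000 in
set_option maxRecDepth 10000 in
lemma cycLem : ∀ x0 x1 x2 x3 : Vc, cubeQ3.Adj x0 x1 → cubeQ3.Adj x1 x2 →
    cubeQ3.Adj x2 x3 → cubeQ3.Adj x3 x0 → ([x1,x2,x3,x0] : List Vc).Nodup →
    ¬∃ a b : Fin 4, ∀ e ∈ [s(x0,x1),s(x1,x2),s(x2,x3),s(x3,x0)], cQ e = a ∨ cQ e = b := by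
  decide

lemma cQ_star : IsStarEdgeColoring cubeQ3 cQ := by
  refine ⟨?_, ?_, ?_⟩
  · rintro e1 he1 e2 he2 hne hsh
    induction e1 using Sym2.ind with | _ x y =>
    induction e2 using Sym2.ind with | _ z w =>
    rw [SimpleGraph.mem_edgeSet] at he1 he2
    simp only [ne_eq, Sym2.eq_iff] at hne
    simp only [Sym2.mem_iff] at hsh
    exact properLem x y z w ⟨he1, he2, hne, hsh⟩
  · intro u v p hp hl
    obtain ⟨a, b, c, h1, h2, h3, h4, rfl⟩ := walk_len4 p hl
    rw [Walk.isPath_def] at hp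
    exact pathLem u a b c v h1 h2 h3 h4 hp
  · intro u p hp hl
    obtain ⟨a, b, c, h1, h2, h3, h4, rfl⟩ := walk_len4 p hl
    exact cycLem u a b c h1 h2 h3 h4 hp.support_nodup


/-! ### Lower bound -/

lemma two_col_pull {V α β : Type*} {f : α → β} (hf : Function.Injective f)
    {c : Sym2 V → α} {l : List (Sym2 V)} (hl : l ≠ [])
    (h : ∃ a b, ∀ e ∈ l, f (c e) = a ∨ f (c e) = b) :
    ∃ a b, ∀ e ∈ l, c e = a ∨ c e = b := by
  obtain ⟨a, b, hab⟩ := h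
  by_cases hA : ∃ e ∈ l, f (c e) = a
  · by_cases hB : ∃ e ∈ l, f (c e) = b
    · obtain ⟨ea, hea, ha⟩ := hA
      obtain ⟨eb, heb, hb⟩ := hB
      exact ⟨c ea, c eb, fun e he => (hab e he).imp
        (fun h => hf (h.trans ha.symm)) (fun h => hf (h.trans hb.symm))⟩
    · obtain ⟨ea, hea, ha⟩ := hA
      refine ⟨c ea, c ea, fun e he => ?_⟩
      rcases hab e he with h | h
      · exact Or.inl (hf (h.trans ha.symm))
      · exact absurd ⟨e, he, h⟩ hB
  · by_cases hB : ∃ e ∈ l, f (c e) = b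
    · obtain ⟨eb, heb, hb⟩ := hB
      refine ⟨c eb, c eb, fun e he => ?_⟩
      rcases hab e he with h | h
      · exact absurd ⟨e, he, h⟩ hA
      · exact Or.inl (hf (h.trans hb.symm))
    · obtain ⟨e0, he0⟩ := List.exists_mem_of_ne_nil l hl
      rcases hab e0 he0 with h | h
      · exact absurd ⟨e0, he0, h⟩ hA
      · exact absurd ⟨e0, he0, h⟩ hB

lemma star_comp {V α β : Type*} {G : SimpleGraph V} {f : α → β} (hf : Function.Injective f)
    {c : Sym2 V → α} (h : IsStarEdgeColoring G c) : IsStarEdgeColoring G (f ∘ c) := by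
  obtain ⟨h1, h2, h3⟩ := h
  refine ⟨fun e1 he1 e2 he2 hne hsh hEq => h1 e1 he1 e2 he2 hne hsh (hf hEq), ?_, ?_⟩
  · intro u v p hp hl hex
    have hne : p.edges ≠ [] := by
      intro hnil
      have hlen := p.length_edges
      rw [hnil, hl] at hlen
      simp at hlen
    exact h2 u v p hp hl (two_col_pull hf hne hex)
  · intro u p hp hl hex
    have hne : p.edges ≠ [] := by
      intro hnil
      have hlen := p.length_edges
      rw [hnil, hl] at hlen
      simp at hlen
    exact h3 u p hp hl (two_col_pull hf hne hex)

def q0 : Vc := ![false,false,false]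
def q1 : Vc := ![true,false,false]
def q2 : Vc := ![false,true,false]
def q3v : Vc := ![true,true,false]
def q5 : Vc := ![true,false,true]
def q6 : Vc := ![false,true,true]
def q7 : Vc := ![true,true,true]

set_option synthInstance.maxSize 2000 in
set_option synthInstance.maxHeartbeats 1000000 in
set_option maxHeartbeats 1000000 in
set_option maxRecDepth 10000 in
/-- The combinatorial core: an unsat core showing no 3-coloring can work. -/
lemma key : ∀ g0 g1 g3 g4 g5 g6 g7 g10 : Fin 3,
    (g0 ≠ g4 ∧ g3 ≠ g4 ∧ g1 ≠ g6 ∧ g5 ≠ g7 ∧ g10 ≠ g4) →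
    (∃ a b : Fin 3, (g0=a∨g0=b)∧(g3=a∨g3=b)∧(g5=a∨g5=b)∧(g1=a∨g1=b)) ∨
    (∃ a b : Fin 3, (g0=a∨g0=b)∧(g3=a∨g3=b)∧(g5=a∨g5=b)∧(g6=a∨g6=b)) ∨
    (∃ a b : Fin 3, (g0=a∨g0=b)∧(g3=a∨g3=b)∧(g7=a∨g7=b)∧(g10=a∨g10=b)) := by
  decide

lemma forall_mem_four {γ : Type*} {P : γ → Prop} {e1 e2 e3 e4 : γ}
    (h1 : P e1) (h2 : P e2) (h3 : P e3) (h4 : P e4) : ∀ e ∈ [e1,e2,e3,e4], P e := by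
  intro e he
  simp only [List.mem_cons, List.not_mem_nil, or_false] at he
  rcases he with rfl | rfl | rfl | rfl <;> assumption

lemma no3 : ¬∃ c : Sym2 Vc → Fin 3, IsStarEdgeColoring cubeQ3 c := by
  rintro ⟨c, h1, h2, h3⟩
  have hA : c s(q0,q1) ≠ c s(q1,q5) :=
    h1 _ ((mem_edgeSet _).2 (by decide)) _ ((mem_edgeSet _).2 (by decide)) (by decide)
      ⟨q1, Sym2.mem_mk_right _ _, Sym2.mem_mk_left _ _⟩
  have hB : c s(q1,q3v) ≠ c s(q1,q5) :=
    h1 _ ((mem_edgeSet _).2 (by decide)) _ ((mem_edgeSet _).2 (by decide)) (by decide)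
      ⟨q1, Sym2.mem_mk_left _ _, Sym2.mem_mk_left _ _⟩
  have hC : c s(q2,q0) ≠ c s(q2,q6) :=
    h1 _ ((mem_edgeSet _).2 (by decide)) _ ((mem_edgeSet _).2 (by decide)) (by decide)
      ⟨q2, Sym2.mem_mk_left _ _, Sym2.mem_mk_left _ _⟩
  have hD : c s(q3v,q2) ≠ c s(q3v,q7) :=
    h1 _ ((mem_edgeSet _).2 (by decide)) _ ((mem_edgeSet _).2 (by decide)) (by decide)
      ⟨q3v, Sym2.mem_mk_left _ _, Sym2.mem_mk_left _ _⟩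
  have hE : c s(q7,q5) ≠ c s(q1,q5) :=
    h1 _ ((mem_edgeSet _).2 (by decide)) _ ((mem_edgeSet _).2 (by decide)) (by decide)
      ⟨q5, Sym2.mem_mk_right _ _, Sym2.mem_mk_right _ _⟩
  -- the 4-cycle q0 q1 q3v q2
  let w1 : cubeQ3.Walk q0 q0 :=
    Walk.cons (by decide : cubeQ3.Adj q0 q1) (Walk.cons (by decide : cubeQ3.Adj q1 q3v)
      (Walk.cons (by decide : cubeQ3.Adj q3v q2) (Walk.cons (by decide : cubeQ3.Adj q2 q0) Walk.nil)))
  have hcyc := h3 q0 w1 ⟨⟨⟨by decide⟩, by simp [w1]⟩, by decide⟩ rfl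
  -- the path q0 q1 q3v q2 q6
  let w2 : cubeQ3.Walk q0 q6 :=
    Walk.cons (by decide : cubeQ3.Adj q0 q1) (Walk.cons (by decide : cubeQ3.Adj q1 q3v)
      (Walk.cons (by decide : cubeQ3.Adj q3v q2) (Walk.cons (by decide : cubeQ3.Adj q2 q6) Walk.nil)))
  have hp2 := h2 q0 q6 w2 ⟨⟨by decide⟩, by decide⟩ rfl
  -- the path q0 q1 q3v q7 q5
  let w3 : cubeQ3.Walk q0 q5 :=
    Walk.cons (by decide : cubeQ3.Adj q0 q1) (Walk.cons (by decide : cubeQ3.Adj q1 q3v)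
      (Walk.cons (by decide : cubeQ3.Adj q3v q7) (Walk.cons (by decide : cubeQ3.Adj q7 q5) Walk.nil)))
  have hp3 := h2 q0 q5 w3 ⟨⟨by decide⟩, by decide⟩ rfl
  rcases key (c s(q0,q1)) (c s(q2,q0)) (c s(q1,q3v)) (c s(q1,q5)) (c s(q3v,q2))
      (c s(q2,q6)) (c s(q3v,q7)) (c s(q7,q5)) ⟨hA, hB, hC, hD, hE⟩ with hb | hb | hb
  · obtain ⟨a, b, x1, x2, x3, x4⟩ := hb
    exact hcyc ⟨a, b, forall_mem_four x1 x2 x3 x4⟩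
  · obtain ⟨a, b, x1, x2, x3, x4⟩ := hb
    exact hp2 ⟨a, b, forall_mem_four x1 x2 x3 x4⟩
  · obtain ⟨a, b, x1, x2, x3, x4⟩ := hb
    exact hp3 ⟨a, b, forall_mem_four x1 x2 x3 x4⟩

/-- Q₃ has a star edge-coloring with 4 colors, and χ'_s(Q₃) = 4. -/
theorem cubeQ3_star_four_coloring :
    (∃ c : Sym2 (Fin 3 → Bool) → Fin 4, IsStarEdgeColoring cubeQ3 c) ∧
      starChromaticIndex cubeQ3 = 4 := by
  refine ⟨⟨cQ, cQ_star⟩, ?_⟩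
  refine le_antisymm (Nat.sInf_le ⟨cQ, cQ_star⟩) (le_csInf ⟨4, cQ, cQ_star⟩ ?_)
  rintro k ⟨c, hc⟩
  by_contra hlt
  push_neg at hlt
  have hk : k ≤ 3 := by omega
  exact no3 ⟨Fin.castLE hk ∘ c, star_comp (Fin.castLE_injective hk) hc⟩
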